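/- (Proposition 2, expected energy) Let α > 2, r > 0, and set v = (α − 1)·r/α. Let P be the Pareto probability density P(ψ) = α·v^α/ψ^{α+1} for ψ ≥ v and P(ψ) = 0 otherwise (so the mean is μ = r). Then for every c_e ≥ (α − 1)/α, the expected energy consumption satisfies E_exp(c_e) = [g_e + i_e·((α − 1)^{α−1}·c_e·(α·c_e)^{−α} + c_e − 1)]·r. -/

import Mathlib

open MeasureTheory Set

/-- Expected energy consumption `E_exp(c) = μ·g_e + i_e·∫₀^{c·μ} (c·μ − ψ) P(ψ) dψ`. -/
noncomputable def Eexp (P : ℝ → ℝ) (g_e i_e μ c : ℝ) : ℝ :=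
  μ * g_e + i_e * ∫ ψ in (0:ℝ)..(c * μ), (c * μ - ψ) * P ψ

/-- The Pareto density with scale `v > 0` and shape `α`. -/
noncomputable def paretoPDF (α v : ℝ) : ℝ → ℝ :=
  fun ψ => if v ≤ ψ then α * v ^ α / ψ ^ (α + 1) else 0

/-- (Proposition 2, expected energy) For the Pareto density with shape `α > 2` and scale
`v = (α − 1)·r/α` (mean `μ = r`), for every `c_e ≥ (α − 1)/α`,
`E_exp(c_e) = [g_e + i_e·((α − 1)^{α−1}·c_e·(α·c_e)^{−α} + c_e − 1)]·r`. -/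
theorem stmt_10 (α r g_e i_e : ℝ) (hα : 2 < α) (hr : 0 < r) (hg : 0 < g_e) (hi : 0 < i_e) :
    ∀ c_e : ℝ, (α - 1) / α ≤ c_e →
      Eexp (paretoPDF α ((α - 1) * r / α)) g_e i_e r c_e
        = (g_e + i_e * ((α - 1) ^ (α - 1) * c_e * (α * c_e) ^ (-α) + c_e - 1)) * r := by
  intro c hc
  have hα0 : (0:ℝ) < α := by linarith
  have hα1 : (0:ℝ) < α - 1 := by linarith
  set v : ℝ := (α - 1) * r / α with hv_def
  have hv : 0 < v := by
    apply div_pos (mul_pos hα1 hr) hα0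
  have hc0 : 0 < c := lt_of_lt_of_le (div_pos hα1 hα0) hc
  set b : ℝ := c * r with hb_def
  have hb : 0 < b := mul_pos hc0 hr
  have hvb : v ≤ b := by
    rw [hv_def, hb_def, div_le_iff₀ hα0]
    have : α - 1 ≤ c * α := (div_le_iff₀ hα0).mp hc
    nlinarith
  -- the integrand on [v, b]
  have hEq : ∀ ψ ∈ Icc v b, (b - ψ) * paretoPDF α v ψ
      = α * v ^ α * (b * ψ ^ (-α - 1) - ψ ^ (-α)) := by
    intro ψ hψ
    have hψ0 : 0 < ψ := lt_of_lt_of_le hv hψ.1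
    have h1 : ψ ^ (-α - 1) = (ψ ^ (α + 1))⁻¹ := by
      rw [← Real.rpow_neg hψ0.le]; ring_nf
    have h2 : ψ * ψ ^ (-α - 1) = ψ ^ (-α) := by
      nth_rewrite 1 [← Real.rpow_one ψ]
      rw [← Real.rpow_add hψ0]; ring_nf
    have hpos : (0:ℝ) < ψ ^ (α + 1) := Real.rpow_pos_of_pos hψ0 _
    rw [paretoPDF, if_pos hψ.1, ← h2, h1]
    field_simp
  have hIcc : Set.uIcc v b = Icc v b := uIcc_of_le hvb
  have hcont : ContinuousOn (fun ψ : ℝ => α * v ^ α * (b * ψ ^ (-α - 1) - ψ ^ (-α))) (Icc v b) := by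
    apply continuousOn_const.mul
    apply ContinuousOn.sub
    · exact continuousOn_const.mul (continuousOn_id.rpow_const fun x hx =>
        Or.inl (ne_of_gt (lt_of_lt_of_le hv hx.1)))
    · exact continuousOn_id.rpow_const fun x hx =>
        Or.inl (ne_of_gt (lt_of_lt_of_le hv hx.1))
  have hcont2 : ContinuousOn (fun ψ : ℝ => (b - ψ) * paretoPDF α v ψ) (Set.uIcc v b) := by
    rw [hIcc]; exact hcont.congr hEq
  have hint_vb : IntervalIntegrable (fun ψ : ℝ => (b - ψ) * paretoPDF α v ψ) volume v b :=
    hcont2.intervalIntegrable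
  have hzero_ae : ∀ᵐ ψ : ℝ, ψ ∈ Set.uIoc (0:ℝ) v → (b - ψ) * paretoPDF α v ψ = 0 := by
    have hsing : (volume : Measure ℝ) {v} = 0 := measure_singleton v
    filter_upwards [compl_mem_ae_iff.mpr hsing] with ψ hψ hmem
    rw [Set.uIoc_of_le hv.le] at hmem
    have hlt : ψ < v := lt_of_le_of_ne hmem.2 hψ
    rw [paretoPDF, if_neg (not_le.mpr hlt), mul_zero]
  have hint_0v : IntervalIntegrable (fun ψ : ℝ => (b - ψ) * paretoPDF α v ψ) volume 0 v := by
    rw [intervalIntegrable_iff_integrableOn_Ioc_of_le hv.le]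
    apply integrableOn_zero.congr_fun_ae
    apply (ae_restrict_iff' measurableSet_Ioc).mpr
    filter_upwards [hzero_ae] with ψ h hmem
    exact (h (by rwa [Set.uIoc_of_le hv.le])).symm
  have hI0v : ∫ ψ in (0:ℝ)..v, (b - ψ) * paretoPDF α v ψ = 0 := by
    rw [intervalIntegral.integral_congr_ae hzero_ae, intervalIntegral.integral_zero]
  have hsplit : ∫ ψ in (0:ℝ)..b, (b - ψ) * paretoPDF α v ψ
      = ∫ ψ in v..b, (b - ψ) * paretoPDF α v ψ := by
    rw [← intervalIntegral.integral_add_adjacent_intervals hint_0v hint_vb, hI0v, zero_add]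
  have hnotin : (0:ℝ) ∉ Set.uIcc v b := by
    rw [hIcc]; exact fun h => absurd h.1 (not_le.mpr hv)
  have hIvb : ∫ ψ in v..b, (b - ψ) * paretoPDF α v ψ
      = α * v ^ α * (b * ((b ^ (-α) - v ^ (-α)) / (-α))
          - (b ^ (1 - α) - v ^ (1 - α)) / (1 - α)) := by
    rw [intervalIntegral.integral_congr (g := fun ψ : ℝ =>
          α * v ^ α * (b * ψ ^ (-α - 1) - ψ ^ (-α))) (by rw [hIcc]; exact hEq)]
    rw [intervalIntegral.integral_const_mul]
    rw [intervalIntegral.integral_sub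
      ((intervalIntegral.intervalIntegrable_rpow (Or.inr hnotin)).const_mul b)
      (intervalIntegral.intervalIntegrable_rpow (Or.inr hnotin))]
    rw [intervalIntegral.integral_const_mul]
    rw [integral_rpow (Or.inr ⟨by intro h; linarith [hα0], hnotin⟩),
        integral_rpow (Or.inr ⟨by intro h; linarith [hα0], hnotin⟩)]
    rw [show -α - 1 + 1 = -α by ring, show -α + 1 = 1 - α by ring]
  have hαv : α * v = (α - 1) * r := by rw [hv_def]; field_simp
  have e1 : v ^ α * v ^ (-α) = 1 := by rw [← Real.rpow_add hv]; simp
  have e2 : v ^ α * v ^ (1 - α) = v := by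
    rw [← Real.rpow_add hv, show α + (1 - α) = 1 by ring, Real.rpow_one]
  have e3 : b * b ^ (-α) = b ^ (1 - α) := by
    nth_rewrite 1 [← Real.rpow_one b]
    rw [← Real.rpow_add hb, show (1:ℝ) + -α = 1 - α by ring]
  have hX : v ^ α * b ^ (1 - α) = ((α - 1) ^ (α - 1) * c * (α * c) ^ (-α)) * r * (α - 1) := by
    have h3 : (α - 1) ^ (α - 1) * (α - 1) = (α - 1) ^ α := by
      have h := Real.rpow_add hα1 (α - 1) 1
      rw [Real.rpow_one, show α - 1 + 1 = α by ring] at h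
      exact h.symm
    rw [hv_def, hb_def, show (α - 1) * r / α = ((α - 1) / α) * r by ring,
        Real.mul_rpow (by positivity) hr.le, Real.mul_rpow hc0.le hr.le,
        Real.div_rpow hα1.le hα0.le, Real.mul_rpow hα0.le hc0.le,
        Real.rpow_neg hα0.le, Real.rpow_neg hc0.le,
        show (1:ℝ) - α = 1 + -α by ring,
        Real.rpow_add hc0, Real.rpow_add hr, Real.rpow_one, Real.rpow_one,
        Real.rpow_neg hc0.le, Real.rpow_neg hr.le, ← h3]
    have hrα : (0:ℝ) < r ^ α := Real.rpow_pos_of_pos hr α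
    have hcα : (0:ℝ) < c ^ α := Real.rpow_pos_of_pos hc0 α
    have haα : (0:ℝ) < α ^ α := Real.rpow_pos_of_pos hα0 α
    field_simp
  have hinner : α * v ^ α * (b * ((b ^ (-α) - v ^ (-α)) / (-α))
        - (b ^ (1 - α) - v ^ (1 - α)) / (1 - α))
      = ((α - 1) ^ (α - 1) * c * (α * c) ^ (-α)) * r + b - r := by
    have h1α : (1:ℝ) - α ≠ 0 := by linarith
    have hαne : α ≠ 0 := ne_of_gt hα0
    field_simp [hαne, h1α]
    linear_combination (v ^ α * (α - 1)) * e3 - (v ^ α * (α - 1) * b ^ (-α)) * hb_def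
      + (c * r * (1 - α)) * e1 + α * e2 - hX + hαv
  show r * g_e + i_e * (∫ ψ in (0:ℝ)..(c * r), (c * r - ψ) * paretoPDF α v ψ) = _
  rw [← hb_def, hsplit, hIvb, hinner, hb_def]
  ring
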